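/- arXiv:1005.4436 — 3 statements merged into one kernel-verified Lean document; each statement's English description precedes it below -/
import Mathlib

section
/- Let h be the 3×3 Hermitian matrix over the Gaussian rationals with rows (0,0,1), (0,1,0), (1,0,0), and let A be the 3×3 matrix over ℤ[i] with rows (0,0,i), (0,1,0), (i,0,-1). Then A preserves the Hermitian form h (i.e., Aᴴ h A = h, where Aᴴ is the conjugate transpose) and A³ = I, so A is an element of order 3 in the unitary group of h. -/
open Matrix

theorem picard_torsion_order_three_gaussian
    (h A : Matrix (Fin 3) (Fin 3) GaussianInt)
    (hh : h = !![0, 0, 1; 0, 1, 0; 1, 0, 0])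
    (hA : A = !![0, 0, Zsqrtd.sqrtd; 0, 1, 0; Zsqrtd.sqrtd, 0, -1]) :
    Aᴴ * h * A = h ∧ A ^ 3 = 1 ∧ A ≠ 1 := by
  subst hh hA
  refine ⟨Matrix.ext fun i j => ?_, ?_, ?_⟩
  · fin_cases i <;> fin_cases j <;>
      simp [Matrix.mul_apply, Fin.sum_univ_three, Matrix.conjTranspose_apply] <;>
      decide
  · rw [pow_succ, pow_succ, pow_one]
    refine Matrix.ext fun i j => ?_
    fin_cases i <;> fin_cases j <;>
      simp [Matrix.mul_apply, Fin.sum_univ_three, Matrix.one_apply]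
  · intro hcon
    have := congrFun (congrFun hcon 0) 0
    simp [Matrix.one_apply] at this
end

section
/- Let h be the 3×3 Hermitian matrix over ℂ with rows (0,0,1), (0,1,0), (1,0,0), and let B be the 3×3 complex matrix with rows (0,0,i/2), (0,1,0), (2i,0,-1). Then Bᴴ h B = h and B³ = I, so B has order 3 in the unitary group of h. -/
open Matrix Complex

theorem sister_torsion_order_three
    (h B : Matrix (Fin 3) (Fin 3) ℂ)
    (hh : h = !![0, 0, 1; 0, 1, 0; 1, 0, 0])
    (hB : B = !![0, 0, I / 2; 0, 1, 0; 2 * I, 0, -1]) :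
    Bᴴ * h * B = h ∧ B ^ 3 = 1 ∧ B ≠ 1 := by
  subst hh hB
  refine ⟨?_, ?_, ?_⟩
  · ext i j
    fin_cases i <;> fin_cases j <;>
      simp [Matrix.mul_apply, Fin.sum_univ_succ, Matrix.conjTranspose_apply,
        Matrix.vecHead, Matrix.vecTail, map_ofNat, div_eq_mul_inv, Complex.ext_iff]
  · rw [pow_succ, pow_succ, pow_one]
    ext i j
    fin_cases i <;> fin_cases j <;>
      simp [Matrix.mul_apply, Fin.sum_univ_succ, Matrix.one_apply,
        Matrix.vecHead, Matrix.vecTail, Complex.ext_iff]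
  · intro hc
    have := congrFun (congrFun hc 0) 0
    simp [Matrix.one_apply] at this
end

section
/- Let χ be the primitive quadratic Dirichlet character of conductor 11 given by the Legendre symbol χ(n) = (n/11) composed with sign -1, i.e., the odd quadratic character mod 11 (the Kronecker symbol (-11/·)). Then L(χ, -2) = -6. -/
open Complex HurwitzZeta

private lemma bern3_eval (z : ℂ) : ((Polynomial.bernoulli 3).map (algebraMap ℚ ℂ)).eval z
    = z^3 - 3/2*z^2 + 1/2*z := by
  simp [Polynomial.bernoulli, Finset.sum_range_succ, bernoulli_one,
    bernoulli_eq_bernoulli'_of_ne_one, bernoulli'_two, bernoulli'_three]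
  ring

private lemma sum_zmod11 (f : ZMod 11 → ℂ) : ∑ j : ZMod 11, f j =
    ∑ n ∈ Finset.range 11, f (n : ZMod 11) := by
  refine Finset.sum_bij' (fun j _ => ZMod.val j) (fun n _ => (n : ZMod 11)) ?_ ?_ ?_ ?_ ?_
  · intro j _; exact Finset.mem_range.mpr (ZMod.val_lt j)
  · intro n _; exact Finset.mem_univ _
  · intro j _; exact ZMod.natCast_rightInverse j
  · intro n hn; exact ZMod.val_natCast_of_lt (Finset.mem_range.mp hn)
  · intro j _; rw [ZMod.natCast_val, ZMod.cast_id]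

private lemma hz11 (n : ℕ) (hn : n < 11) :
    hurwitzZetaOdd (ZMod.toAddCircle ((n : ZMod 11))) (-2)
      = -1/3 * (((n:ℂ)/11)^3 - 3/2*((n:ℂ)/11)^2 + 1/2*((n:ℂ)/11)) := by
  rw [ZMod.toAddCircle_apply, ZMod.val_natCast_of_lt hn]
  have hx : ((n : ℝ) / 11) ∈ Set.Icc (0:ℝ) 1 := by
    constructor
    · positivity
    · rw [div_le_one (by norm_num)]; exact_mod_cast hn.le
  have h := hurwitzZetaOdd_neg_two_mul_nat (k := 1) one_ne_zero hx
  norm_num at h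
  rw [show ((11:ℕ):ℝ) = (11:ℝ) by norm_num, h, Polynomial.aeval_def, ← Polynomial.eval_map,
    bern3_eval]
  ring

theorem LFunction_quadratic_character_conductor_eleven_at_neg_two
    (χ : DirichletCharacter ℂ 11)
    (hχ : ∀ n : ℕ, χ (n : ZMod 11) =
      if n % 11 = 0 then 0
      else if n % 11 = 1 ∨ n % 11 = 3 ∨ n % 11 = 4 ∨ n % 11 = 5 ∨ n % 11 = 9 then 1
      else -1) :
    DirichletCharacter.LFunction χ (-2) = -6 := by
  have hm1 : χ (-1) = -1 := by
    have h10 := hχ 10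
    norm_num at h10
    rwa [show (10 : ZMod 11) = -1 by decide] at h10
  have hodd : Function.Odd (⇑χ : ZMod 11 → ℂ) := by
    intro j
    rw [show (-j : ZMod 11) = (-1) * j by ring, map_mul, hm1]
    ring
  rw [DirichletCharacter.LFunction, ZMod.LFunction_def_odd hodd]
  rw [sum_zmod11 (fun j => χ j * hurwitzZetaOdd (ZMod.toAddCircle j) (-2))]
  simp only [Finset.sum_range_succ, Finset.sum_range_zero]
  rw [hz11 0 (by norm_num), hz11 1 (by norm_num), hz11 2 (by norm_num), hz11 3 (by norm_num),
    hz11 4 (by norm_num), hz11 5 (by norm_num), hz11 6 (by norm_num), hz11 7 (by norm_num),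
    hz11 8 (by norm_num), hz11 9 (by norm_num), hz11 10 (by norm_num),
    hχ 0, hχ 1, hχ 2, hχ 3, hχ 4, hχ 5, hχ 6, hχ 7, hχ 8, hχ 9, hχ 10]
  norm_num
end
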